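/- Let n ≥ 2 and (n-1)/p < α ≤ n/p for some 1 < p < ∞. Define f : ℝ^{n-1} → ℝ by f(x') = (1+|x'|)^{-α}, and let v be its Poisson extension to the upper half-space. Then v ∉ L^p(ℝ^n_+). In particular, the Poisson operator does not map Ẇ^{1-1/p,p}(ℝ^{n-1}) into L^p(ℝ^n_+). -/

import Mathlib

open MeasureTheory
open Metric Set
open scoped ENNReal

lemma lint_inv_top : ∫⁻ t in Set.Ici (1:ℝ), ENNReal.ofReal t⁻¹ = ⊤ := by
  rw [eq_top_iff]
  have h2 : ∫⁻ t in Set.Ioi (1:ℝ), ENNReal.ofReal t⁻¹ = ⊤ := by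
    by_contra h
    have hint : IntegrableOn (fun t : ℝ => t⁻¹) (Set.Ioi 1) := by
      refine ⟨measurable_inv.aestronglyMeasurable, ?_⟩
      rw [hasFiniteIntegral_iff_norm]
      have heq : ∀ᵐ t ∂(volume.restrict (Set.Ioi (1:ℝ))),
          ENNReal.ofReal ‖t⁻¹‖ = ENNReal.ofReal t⁻¹ := by
        filter_upwards [ae_restrict_mem measurableSet_Ioi] with t ht
        rw [Real.norm_eq_abs, abs_of_nonneg (inv_nonneg.mpr (by linarith [Set.mem_Ioi.mp ht]))]
      rw [lintegral_congr_ae heq]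
      exact lt_top_iff_ne_top.mpr h
    have hint2 : IntegrableOn (fun t : ℝ => t ^ (-1 : ℝ)) (Set.Ioi 1) := by
      apply hint.congr_fun ?_ measurableSet_Ioi
      intro t ht
      exact (Real.rpow_neg_one t).symm
    have := (integrableOn_Ioi_rpow_iff zero_lt_one).mp hint2
    linarith
  rw [← h2]
  exact lintegral_mono' (Measure.restrict_mono Set.Ioi_subset_Ici_self le_rfl) le_rfl

/-- with `(n-1)/p < α ≤ n/p`, `1 < p < ∞`, the Poisson extension `v` of
`f(x') = (1+|x'|)^{-α}` fails to belong to `L^p(ℝ^n_+)`; in particular the Poisson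
operator does not map `Ẇ^{1-1/p,p}(ℝ^{n-1})` into `L^p(ℝ^n_+)`. -/
theorem stmt_7 (n : ℕ) (hn : 2 ≤ n) (p α : ℝ) (hp : 1 < p)
    (hα1 : ((n : ℝ) - 1) / p < α) (hα2 : α ≤ (n : ℝ) / p)
    (c : ℝ) (hc : 0 < c)
    (hnorm : ∀ t : ℝ, 0 < t →
      (∫ x' : EuclideanSpace ℝ (Fin (n - 1)),
        c * t / ((‖x'‖ ^ 2 + t ^ 2) ^ ((n : ℝ) / 2))) = 1) :
    ¬ MemLp
        (fun x : EuclideanSpace ℝ (Fin (n - 1)) × ℝ =>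
          ∫ y, c * x.2 / ((‖x.1 - y‖ ^ 2 + x.2 ^ 2) ^ ((n : ℝ) / 2)) *
            (1 + ‖y‖) ^ (-α))
        (ENNReal.ofReal p)
        (volume.restrict {y : EuclideanSpace ℝ (Fin (n - 1)) × ℝ | 0 < y.2}) := by
  intro hmem
  set E := EuclideanSpace ℝ (Fin (n - 1)) with hEdef
  set v : E × ℝ → ℝ := fun x =>
      ∫ y, c * x.2 / ((‖x.1 - y‖ ^ 2 + x.2 ^ 2) ^ ((n : ℝ) / 2)) * (1 + ‖y‖) ^ (-α) with hvdef
  have hp0 : (0:ℝ) < p := by linarith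
  have hn1 : (1:ℝ) ≤ (n:ℝ) - 1 := by
    have h2n : (2:ℝ) ≤ (n:ℝ) := by exact_mod_cast hn
    linarith
  have hα0 : 0 < α := lt_trans (by positivity) hα1
  have hαp : α * p ≤ (n:ℝ) := (le_div_iff₀ hp0).mp hα2
  -- volume of unit ball
  set V : ℝ≥0∞ := volume (ball (0:E) 1) with hVdef
  have hV0 : V ≠ 0 := (measure_ball_pos volume _ one_pos).ne'
  have hVtop : V ≠ ⊤ := measure_ball_lt_top.ne
  set VR : ℝ := V.toReal with hVRdef
  have hVR0 : 0 < VR := ENNReal.toReal_pos hV0 hVtop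
  have hdfin : Module.finrank ℝ E = n - 1 := finrank_euclideanSpace_fin
  have hdcast : ((n - 1 : ℕ) : ℝ) = (n:ℝ) - 1 := by
    have h1n : 1 ≤ n := by omega
    push_cast [Nat.cast_sub h1n]
    ring
  -- kernel integrability
  have hKint : ∀ t : ℝ, 0 < t →
      Integrable (fun y : E => c * t / ((‖y‖ ^ 2 + t ^ 2) ^ ((n:ℝ)/2))) := by
    intro t ht
    by_contra h
    have h1 := hnorm t ht
    rw [integral_undef h] at h1
    exact zero_ne_one h1
  have hKx : ∀ (t:ℝ), 0 < t → ∀ x' : E,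
      Integrable (fun y : E => c * t / ((‖x' - y‖ ^ 2 + t ^ 2) ^ ((n:ℝ)/2))) := by
    intro t ht x'
    exact (integrable_comp_sub_left
      (fun y : E => c * t / ((‖y‖ ^ 2 + t ^ 2) ^ ((n:ℝ)/2))) x').mpr (hKint t ht)
  have hcont : ∀ (t : ℝ), 0 < t → ∀ x' : E,
      Continuous (fun y : E =>
        c * t / ((‖x' - y‖ ^ 2 + t ^ 2) ^ ((n:ℝ)/2)) * (1 + ‖y‖) ^ (-α)) := by
    intro t ht x'
    have hpos : ∀ y : E, (0:ℝ) < ‖x' - y‖ ^ 2 + t ^ 2 := fun y => by positivity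
    have h1 : Continuous fun y : E => (‖x' - y‖ ^ 2 + t ^ 2 : ℝ) :=
      (((continuous_const.sub continuous_id).norm).pow 2).add continuous_const
    refine Continuous.mul ?_ ?_
    · exact continuous_const.div (h1.rpow_const fun y => Or.inl (hpos y).ne')
        (fun y => (Real.rpow_pos_of_pos (hpos y) _).ne')
    · exact (continuous_const.add continuous_norm).rpow_const
        (fun y => Or.inl (add_pos_of_pos_of_nonneg one_pos (norm_nonneg _)).ne')
  have hgint : ∀ (t:ℝ), 0 < t → ∀ x' : E,
      Integrable (fun y : E =>
        c * t / ((‖x' - y‖ ^ 2 + t ^ 2) ^ ((n:ℝ)/2)) * (1 + ‖y‖) ^ (-α)) := by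
    intro t ht x'
    refine (hKx t ht x').mono' ((hcont t ht x').aestronglyMeasurable) ?_
    filter_upwards with y
    have hk0 : 0 ≤ c * t / ((‖x' - y‖ ^ 2 + t ^ 2) ^ ((n:ℝ)/2)) := by positivity
    have hf0 : 0 ≤ (1 + ‖y‖ : ℝ) ^ (-α) := Real.rpow_nonneg (by positivity) _
    have hf1 : (1 + ‖y‖ : ℝ) ^ (-α) ≤ 1 :=
      Real.rpow_le_one_of_one_le_of_nonpos (by linarith [norm_nonneg y]) (by linarith)
    rw [Real.norm_eq_abs, abs_of_nonneg (mul_nonneg hk0 hf0)]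
    exact mul_le_of_le_one_right hk0 hf1
  -- constant
  set C0 : ℝ := c * ((5:ℝ) ^ ((n:ℝ)/2))⁻¹ * (2:ℝ) ^ (-α) * VR with hC0def
  have hC00 : 0 < C0 := by positivity
  -- pointwise lower bound on S
  have key : ∀ x : E × ℝ, 1 ≤ x.2 → ‖x.1‖ ≤ x.2 → C0 * x.2 ^ (-α) ≤ v x := by
    intro x h1 h2
    set t := x.2 with htdef
    have ht0 : (0:ℝ) < t := lt_of_lt_of_le one_pos h1
    set L : ℝ := c * t / ((5 * t ^ 2) ^ ((n:ℝ)/2)) * (2 * t) ^ (-α) with hLdef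
    have hL0 : 0 ≤ L := by positivity
    have hlow : ∀ y ∈ closedBall (0:E) t,
        L ≤ c * t / ((‖x.1 - y‖ ^ 2 + t ^ 2) ^ ((n:ℝ)/2)) * (1 + ‖y‖) ^ (-α) := by
      intro y hy
      rw [mem_closedBall_zero_iff] at hy
      have hnub : ‖x.1 - y‖ ^ 2 + t ^ 2 ≤ 5 * t ^ 2 := by
        have h3 : ‖x.1 - y‖ ≤ 2 * t := by
          calc ‖x.1 - y‖ ≤ ‖x.1‖ + ‖y‖ := norm_sub_le _ _
            _ ≤ 2 * t := by linarith
        nlinarith [norm_nonneg (x.1 - y)]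
      have hden : (‖x.1 - y‖ ^ 2 + t ^ 2 : ℝ) ^ ((n:ℝ)/2) ≤ (5 * t ^ 2) ^ ((n:ℝ)/2) :=
        Real.rpow_le_rpow (by positivity) hnub (by positivity)
      have hA : c * t / ((5 * t ^ 2) ^ ((n:ℝ)/2))
          ≤ c * t / ((‖x.1 - y‖ ^ 2 + t ^ 2) ^ ((n:ℝ)/2)) :=
        div_le_div_of_nonneg_left (by positivity)
          (Real.rpow_pos_of_pos (by positivity) _) hden
      have hB : ((2:ℝ) * t) ^ (-α) ≤ (1 + ‖y‖) ^ (-α) :=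
        Real.rpow_le_rpow_of_nonpos (by positivity) (by linarith) (by linarith)
      exact mul_le_mul hA hB (Real.rpow_nonneg (by positivity) _) (by positivity)
    have hvol : (volume (closedBall (0:E) t)).toReal = t ^ (n - 1 : ℕ) * VR := by
      rw [Measure.addHaar_closedBall volume (0:E) ht0.le, hdfin]
      rw [ENNReal.toReal_mul, ENNReal.toReal_ofReal (by positivity)]
    have step1 : L * (t ^ (n - 1 : ℕ) * VR) ≤ ∫ y in closedBall (0:E) t,
        c * t / ((‖x.1 - y‖ ^ 2 + t ^ 2) ^ ((n:ℝ)/2)) * (1 + ‖y‖) ^ (-α) := by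
      have := setIntegral_mono_on (integrableOn_const measure_closedBall_lt_top.ne)
        ((hgint t ht0 x.1).integrableOn) measurableSet_closedBall hlow
      rwa [setIntegral_const, smul_eq_mul, measureReal_def, hvol, mul_comm] at this
    have step2 : (∫ y in closedBall (0:E) t,
          c * t / ((‖x.1 - y‖ ^ 2 + t ^ 2) ^ ((n:ℝ)/2)) * (1 + ‖y‖) ^ (-α))
        ≤ v x := by
      apply setIntegral_le_integral (hgint t ht0 x.1)
      filter_upwards with y
      have hk0 : 0 ≤ c * t / ((‖x.1 - y‖ ^ 2 + t ^ 2) ^ ((n:ℝ)/2)) := by positivity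
      exact mul_nonneg hk0 (Real.rpow_nonneg (by positivity) _)
    refine le_trans ?_ (step1.trans step2)
    -- algebra: C0 * t^(-α) = L * (t^(n-1) * VR)
    have e1 : ((5 * t ^ 2 : ℝ)) ^ ((n:ℝ)/2) = 5 ^ ((n:ℝ)/2) * t ^ (n:ℝ) := by
      rw [Real.mul_rpow (by norm_num) (by positivity), ← Real.rpow_natCast t 2,
        ← Real.rpow_mul ht0.le, show ((2:ℕ):ℝ) * ((n:ℝ)/2) = (n:ℝ) by push_cast; ring]
    have e2 : ((2 * t : ℝ)) ^ (-α) = 2 ^ (-α) * t ^ (-α) :=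
      Real.mul_rpow (by norm_num) ht0.le
    have e3 : (t:ℝ) ^ (n - 1 : ℕ) = t ^ ((n:ℝ) - 1) := by
      rw [← Real.rpow_natCast t (n-1), hdcast]
    have e5 : t * t ^ ((n:ℝ) - 1) = t ^ (n:ℝ) := by
      nth_rewrite 1 [← Real.rpow_one t]
      rw [← Real.rpow_add ht0]
      norm_num
    have hne : (t:ℝ) ^ ((n:ℝ)) ≠ 0 := (Real.rpow_pos_of_pos ht0 _).ne'
    have e4 : t * (t ^ (n:ℝ))⁻¹ * (t ^ ((n:ℝ) - 1)) = 1 := by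
      rw [mul_comm t ((t ^ (n:ℝ))⁻¹), mul_assoc, e5, inv_mul_cancel₀ hne]
    apply le_of_eq
    calc C0 * t ^ (-α) = C0 * t ^ (-α) * (t * (t ^ (n:ℝ))⁻¹ * (t ^ ((n:ℝ) - 1))) := by
          rw [e4, mul_one]
      _ = L * (t ^ (n - 1 : ℕ) * VR) := by
          rw [hC0def, hLdef, e1, e2, e3, div_eq_mul_inv (c * t), mul_inv]
          ring
  -- the bad set S
  set S : Set (E × ℝ) := {z : E × ℝ | 1 ≤ z.2 ∧ ‖z.1‖ ≤ z.2} with hSdef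
  have hSm : MeasurableSet S := by
    apply MeasurableSet.inter
    · exact measurableSet_le measurable_const measurable_snd
    · exact measurableSet_le measurable_fst.norm measurable_snd
  have hSsub : S ⊆ {y : E × ℝ | 0 < y.2} := fun z hz => lt_of_lt_of_le one_pos hz.1
  have hrr : (volume.restrict {y : E × ℝ | 0 < y.2}).restrict S = volume.restrict S := by
    rw [Measure.restrict_restrict hSm, Set.inter_eq_left.mpr hSsub]
  have hmem2 : MemLp v (ENNReal.ofReal p) (volume.restrict S) := by
    have := hmem.restrict S
    rwa [hrr] at this
  -- transfer to the simple function w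
  set w : E × ℝ → ℝ := fun z => C0 * z.2 ^ (-α) with hwdef
  have hwmeas : Measurable w := measurable_const.mul (measurable_snd.pow_const (-α))
  have hwv : ∀ᵐ z ∂(volume.restrict S), ‖w z‖ ≤ ‖v z‖ := by
    filter_upwards [ae_restrict_mem hSm] with z hz
    have h1 := key z hz.1 hz.2
    have hz0 : (0:ℝ) ≤ z.2 := le_trans zero_le_one hz.1
    have hw0 : 0 ≤ w z := mul_nonneg hC00.le (Real.rpow_nonneg hz0 _)
    rw [Real.norm_eq_abs, abs_of_nonneg hw0]
    exact h1.trans (le_abs_self _)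
  have hwmem : MemLp w (ENNReal.ofReal p) (volume.restrict S) :=
    hmem2.mono hwmeas.aestronglyMeasurable hwv
  have hP0 : (ENNReal.ofReal p) ≠ 0 := by
    simp only [ne_eq, ENNReal.ofReal_eq_zero, not_le]
    exact hp0
  have hInt : Integrable (fun z => ‖w z‖ ^ p) (volume.restrict S) := by
    have := hwmem.integrable_norm_rpow hP0 ENNReal.ofReal_ne_top
    rwa [ENNReal.toReal_ofReal hp0.le] at this
  -- now derive the contradiction via a lintegral computation
  have hfin : (∫⁻ z, ENNReal.ofReal ‖(‖w z‖ ^ p)‖ ∂(volume.restrict S)) < ⊤ := by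
    have := hInt.2
    rwa [hasFiniteIntegral_iff_norm] at this
  have htotal : (∫⁻ z, ENNReal.ofReal ‖(‖w z‖ ^ p)‖ ∂(volume.restrict S)) = ⊤ := by
    set g : ℝ → ℝ≥0∞ := fun s => ENNReal.ofReal (C0 ^ p * s ^ (-(α * p))) with hgdef
    have hgm : Measurable g :=
      ENNReal.measurable_ofReal.comp (measurable_const.mul (measurable_id.pow_const _))
    set F : E × ℝ → ℝ≥0∞ := S.indicator (fun z => g z.2) with hFdef
    have hFm : Measurable F := (hgm.comp measurable_snd).indicator hSm
    have hinner : ∀ t : ℝ, (∫⁻ x' : E, F (x', t))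
        = (Set.Ici (1:ℝ)).indicator (fun t => g t * volume (closedBall (0:E) t)) t := by
      intro t
      by_cases ht : 1 ≤ t
      · have hfun : (fun x' : E => F (x', t))
            = (closedBall (0:E) t).indicator (fun _ => g t) := by
          ext x'
          simp only [hFdef]
          by_cases hx : ‖x'‖ ≤ t
          · rw [Set.indicator_of_mem (show ((x', t) : E × ℝ) ∈ S from ⟨ht, hx⟩),
              Set.indicator_of_mem (mem_closedBall_zero_iff.mpr hx)]
          · rw [Set.indicator_of_notMem (fun h => hx h.2),
              Set.indicator_of_notMem (fun h => hx (mem_closedBall_zero_iff.mp h))]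
        rw [hfun, lintegral_indicator_const measurableSet_closedBall,
          Set.indicator_of_mem (Set.mem_Ici.mpr ht)]
      · have hfun : (fun x' : E => F (x', t)) = fun _ => 0 := by
          ext x'
          simp only [hFdef]
          exact Set.indicator_of_notMem (fun h => ht h.1) _
        rw [hfun, lintegral_const, zero_mul, Set.indicator_of_notMem (fun h => ht (Set.mem_Ici.mp h))]
    have hC0p : (0:ℝ) < C0 ^ p := Real.rpow_pos_of_pos hC00 _
    have hne0 : ENNReal.ofReal (C0 ^ p) * V ≠ 0 := by
      apply mul_ne_zero _ hV0
      simp only [ne_eq, ENNReal.ofReal_eq_zero, not_le]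
      exact hC0p
    have h2 : ∫⁻ t in Set.Ici (1:ℝ),
        (ENNReal.ofReal (C0 ^ p) * V) * ENNReal.ofReal t⁻¹ = ⊤ := by
      rw [lintegral_const_mul _ measurable_inv.ennreal_ofReal,
        lint_inv_top, ENNReal.mul_top hne0]
    have houter : ∀ t ∈ Set.Ici (1:ℝ),
        (ENNReal.ofReal (C0 ^ p) * V) * ENNReal.ofReal t⁻¹
          ≤ g t * volume (closedBall (0:E) t) := by
      intro t ht
      have ht1 : (1:ℝ) ≤ t := ht
      have ht0 : (0:ℝ) < t := lt_of_lt_of_le one_pos ht1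
      rw [Measure.addHaar_closedBall volume (0:E) ht0.le, hdfin, hgdef]
      have hre : C0 ^ p * t⁻¹ ≤ C0 ^ p * t ^ (-(α * p)) * t ^ (n - 1 : ℕ) := by
        have e3 : (t:ℝ) ^ (n - 1 : ℕ) = t ^ ((n:ℝ) - 1) := by
          rw [← Real.rpow_natCast t (n-1), hdcast]
        rw [e3, mul_assoc, ← Real.rpow_add ht0]
        have hexp : (-1:ℝ) ≤ -(α * p) + ((n:ℝ) - 1) := by linarith
        have := Real.rpow_le_rpow_of_exponent_le ht1 hexp
        rw [Real.rpow_neg_one] at this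
        exact mul_le_mul_of_nonneg_left this hC0p.le
      calc (ENNReal.ofReal (C0 ^ p) * V) * ENNReal.ofReal t⁻¹
          = ENNReal.ofReal (C0 ^ p * t⁻¹) * V := by
            rw [ENNReal.ofReal_mul hC0p.le, mul_right_comm]
        _ ≤ ENNReal.ofReal (C0 ^ p * t ^ (-(α * p)) * t ^ (n - 1 : ℕ)) * V := by
            exact mul_le_mul_left (ENNReal.ofReal_le_ofReal hre) V
        _ = ENNReal.ofReal (C0 ^ p * t ^ (-(α * p))) * (ENNReal.ofReal (t ^ (n - 1 : ℕ)) * V) := by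
            rw [ENNReal.ofReal_mul (by positivity), mul_assoc]
    have h1 : (∫⁻ z in S, g z.2) = ⊤ := by
      calc (∫⁻ z in S, g z.2)
          = ∫⁻ z, F z := (lintegral_indicator hSm _).symm
        _ = ∫⁻ z, F z ∂(volume.prod volume) := by rw [← Measure.volume_eq_prod]
        _ = ∫⁻ t, ∫⁻ x', F (x', t) := lintegral_prod_symm F hFm.aemeasurable
        _ = ∫⁻ t, (Set.Ici (1:ℝ)).indicator
              (fun t => g t * volume (closedBall (0:E) t)) t := lintegral_congr hinner
        _ = ∫⁻ t in Set.Ici (1:ℝ), g t * volume (closedBall (0:E) t) :=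
            lintegral_indicator measurableSet_Ici _
        _ = ⊤ := by
            rw [eq_top_iff, ← h2]
            apply lintegral_mono_ae
            filter_upwards [ae_restrict_mem measurableSet_Ici] with t ht
            exact houter t ht
    rw [eq_top_iff, ← h1]
    apply lintegral_mono_ae
    filter_upwards [ae_restrict_mem hSm] with z hz
    have hz1 : (1:ℝ) ≤ z.2 := hz.1
    have hz0 : (0:ℝ) < z.2 := lt_of_lt_of_le one_pos hz1
    have hw0 : 0 ≤ w z := mul_nonneg hC00.le (Real.rpow_nonneg hz0.le _)
    have heq : ‖(‖w z‖ ^ p)‖ = C0 ^ p * z.2 ^ (-(α * p)) := by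
      rw [Real.norm_eq_abs, abs_of_nonneg (Real.rpow_nonneg (norm_nonneg _) p),
        Real.norm_eq_abs, abs_of_nonneg hw0]
      show (C0 * z.2 ^ (-α)) ^ p = _
      rw [Real.mul_rpow hC00.le (Real.rpow_nonneg hz0.le _), ← Real.rpow_mul hz0.le, neg_mul]
    rw [heq]
  rw [htotal] at hfin
  exact lt_irrefl _ hfin
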